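/- The Dyck word abcd ∈ D^Row never occurs as a row of any picture in the well-nested Dyck language DW₁; hence ROW(DW₁) is strictly included in D^Row. -/

import Mathlib

/-- The alphabet Δ₁ = {a, b, c, d}. -/
inductive Del : Type
  | a | b | c | d
deriving DecidableEq

/-- Row cancellation: pairs [a,b] and [c,d]. -/
def rowStep (w w' : List Del) : Prop :=
  ∃ (u v : List Del),
    (w = u ++ [Del.a, Del.b] ++ v ∨ w = u ++ [Del.c, Del.d] ++ v) ∧ w' = u ++ v

/-- The row Dyck language D^Row. -/
def DRow (w : List Del) : Prop := Relation.ReflTransGen rowStep w []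

/-- Column cancellation: pairs [a,c] and [b,d]. -/
def colStep (w w' : List Del) : Prop :=
  ∃ (u v : List Del),
    (w = u ++ [Del.a, Del.c] ++ v ∨ w = u ++ [Del.b, Del.d] ++ v) ∧ w' = u ++ v

/-- The column Dyck language D^Col. -/
def DCol (w : List Del) : Prop := Relation.ReflTransGen colStep w []

/-- Row i (of length n) of a picture. -/
def row (p : ℕ → ℕ → Del) (n i : ℕ) : List Del := (List.range n).map (p i)

/-- Column j (of length m) of a picture. -/
def col (p : ℕ → ℕ → Del) (m j : ℕ) : List Del :=
  (List.range m).map (fun i => p i j)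

/-- The Dyck crossword language DC₁: nonempty pictures all of whose rows
are in D^Row and all of whose columns are in D^Col. -/
def DC (m n : ℕ) (p : ℕ → ℕ → Del) : Prop :=
  1 ≤ m ∧ 1 ≤ n ∧ (∀ i < m, DRow (row p n i)) ∧ (∀ j < n, DCol (col p m j))

/-- Dyck words over the single matching pair [a,b] (used for the top row of
an accretion frame). -/
def abStep (w w' : List Del) : Prop :=
  ∃ (u v : List Del), w = u ++ [Del.a, Del.b] ++ v ∧ w' = u ++ v

def DyckAB (w : List Del) : Prop := Relation.ReflTransGen abStep w []

/-- Dyck words over the single matching pair [a,c] (used for the left column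
of an accretion frame). -/
def acStep (w w' : List Del) : Prop :=
  ∃ (u v : List Del), w = u ++ [Del.a, Del.c] ++ v ∧ w' = u ++ v

def DyckAC (w : List Del) : Prop := Relation.ReflTransGen acStep w []

/-- The map h_r : a ↦ c, b ↦ d. -/
def hr : Del → Del
  | Del.a => Del.c
  | Del.b => Del.d
  | x => x

/-- The map h_c : a ↦ b, c ↦ d. -/
def hc : Del → Del
  | Del.a => Del.b
  | Del.c => Del.d
  | x => x

def inDom (d : ℕ × ℕ × ℕ × ℕ) (r s : ℕ) : Prop :=
  d.1 ≤ r ∧ r ≤ d.2.2.1 ∧ d.2.1 ≤ s ∧ s ≤ d.2.2.2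

/-- The well-nested Dyck language DW₁: the smallest picture language
containing the empty picture and closed under nesting accretion and the
Simplot closure (tessellation). -/
inductive DW : ℕ → ℕ → (ℕ → ℕ → Del) → Prop
  | empty (p : ℕ → ℕ → Del) : DW 0 0 p
  | accrete (m n : ℕ) (p q : ℕ → ℕ → Del) (wr wc : List Del) :
      DW m n p → DyckAB wr → DyckAC wc → wr.length = n → wc.length = m →
      q 0 0 = Del.a → q 0 (n + 1) = Del.b →
      q (m + 1) 0 = Del.c → q (m + 1) (n + 1) = Del.d →
      (∀ s < n, q 0 (s + 1) = wr.getD s Del.a) →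
      (∀ s < n, q (m + 1) (s + 1) = hr (wr.getD s Del.a)) →
      (∀ r < m, q (r + 1) 0 = wc.getD r Del.a) →
      (∀ r < m, q (r + 1) (n + 1) = hc (wc.getD r Del.a)) →
      (∀ r < m, ∀ s < n, q (r + 1) (s + 1) = p r s) →
      DW (m + 2) (n + 2) q
  | simplot (m n : ℕ) (p : ℕ → ℕ → Del) (ds : Set (ℕ × ℕ × ℕ × ℕ)) :
      1 ≤ m → 1 ≤ n →
      (∀ d ∈ ds, d.1 ≤ d.2.2.1 ∧ d.2.2.1 < m ∧ d.2.1 ≤ d.2.2.2 ∧ d.2.2.2 < n) →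
      (∀ r < m, ∀ s < n, ∃! d, d ∈ ds ∧ inDom d r s) →
      (∀ d ∈ ds, DW (d.2.2.1 - d.1 + 1) (d.2.2.2 - d.2.1 + 1)
        (fun r s => p (d.1 + r) (d.2.1 + s))) →
      DW m n p

/-- ROW(DW₁): the set of words occurring as rows of pictures of DW₁. -/
def ROWDW : Set (List Del) :=
  {w | ∃ (m n : ℕ) (p : ℕ → ℕ → Del) (i : ℕ), DW m n p ∧ i < m ∧ row p n i = w}

namespace Helper
open Del

/-! ### Basic word lemmas -/

lemma drow_nil : DRow ([] : List Del) := Relation.ReflTransGen.refl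

lemma rowStep_append_right {w w' : List Del} (v : List Del) (h : rowStep w w') :
    rowStep (w ++ v) (w' ++ v) := by
  obtain ⟨u, x, h1, h2⟩ := h
  refine ⟨u, x ++ v, ?_, by simp [h2]⟩
  rcases h1 with h1 | h1 <;> simp [h1]

lemma rowStep_cons {w w' : List Del} (z : Del) (h : rowStep w w') :
    rowStep (z :: w) (z :: w') := by
  obtain ⟨u, x, h1, h2⟩ := h
  refine ⟨z :: u, x, ?_, by simp [h2]⟩
  rcases h1 with h1 | h1 <;> simp [h1]

lemma drow_star_append {w w' : List Del} (v : List Del)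
    (h : Relation.ReflTransGen rowStep w w') :
    Relation.ReflTransGen rowStep (w ++ v) (w' ++ v) :=
  h.lift (· ++ v) (fun _ _ hs => rowStep_append_right v hs)

lemma drow_star_cons {w w' : List Del} (z : Del)
    (h : Relation.ReflTransGen rowStep w w') :
    Relation.ReflTransGen rowStep (z :: w) (z :: w') :=
  h.lift (z :: ·) (fun _ _ hs => rowStep_cons z hs)

lemma drow_append {u v : List Del} (hu : DRow u) (hv : DRow v) : DRow (u ++ v) := by
  have h1 : Relation.ReflTransGen rowStep (u ++ v) ([] ++ v) := drow_star_append v hu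
  simpa [DRow] using h1.trans hv

lemma drow_ab : DRow [Del.a, Del.b] := by
  refine Relation.ReflTransGen.single ⟨[], [], Or.inl ?_, rfl⟩
  simp

lemma drow_cd : DRow [Del.c, Del.d] := by
  refine Relation.ReflTransGen.single ⟨[], [], Or.inr ?_, rfl⟩
  simp

lemma drow_wrap {u : List Del} {x y : Del}
    (hxy : (x = Del.a ∧ y = Del.b) ∨ (x = Del.c ∧ y = Del.d)) (hu : DRow u) :
    DRow (x :: (u ++ [y])) := by
  have h1 : Relation.ReflTransGen rowStep (x :: (u ++ [y])) (x :: ([] ++ [y])) :=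
    drow_star_cons x (drow_star_append [y] hu)
  refine h1.trans ?_
  simp only [List.nil_append]
  rcases hxy with ⟨hx, hy⟩ | ⟨hx, hy⟩ <;> subst hx <;> subst hy
  · exact drow_ab
  · exact drow_cd

lemma dyckAB_mem {w : List Del} (h : DyckAB w) :
    ∀ x ∈ w, x = Del.a ∨ x = Del.b := by
  induction h using Relation.ReflTransGen.head_induction_on with
  | refl => intro x hx; simp at hx
  | head hs _ ih =>
    obtain ⟨u, v, h1, h2⟩ := hs
    subst h1; subst h2
    intro x hx
    simp only [List.mem_append, List.mem_cons, List.mem_singleton] at hx ⊢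
    rcases hx with (hx | hx) | hx
    · exact ih x (by simp [hx])
    · rcases hx with hx | hx | hx
      · exact Or.inl hx
      · exact Or.inr hx
      · simp at hx
    · exact ih x (by simp [hx])

lemma dyckAC_mem {w : List Del} (h : DyckAC w) :
    ∀ x ∈ w, x = Del.a ∨ x = Del.c := by
  induction h using Relation.ReflTransGen.head_induction_on with
  | refl => intro x hx; simp at hx
  | head hs _ ih =>
    obtain ⟨u, v, h1, h2⟩ := hs
    subst h1; subst h2
    intro x hx
    simp only [List.mem_append, List.mem_cons, List.mem_singleton] at hx ⊢
    rcases hx with (hx | hx) | hx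
    · exact ih x (by simp [hx])
    · rcases hx with hx | hx | hx
      · exact Or.inl hx
      · exact Or.inr hx
      · simp at hx
    · exact ih x (by simp [hx])

lemma dyckAB_drow {w : List Del} (h : DyckAB w) : DRow w :=
  (show Relation.ReflTransGen abStep w [] from h).lift id
    (fun _ _ ⟨u, v, h1, h2⟩ => (⟨u, v, Or.inl h1, h2⟩ : rowStep _ _))

lemma dyckAB_map_hr_drow {w : List Del} (h : DyckAB w) : DRow (w.map hr) := by
  induction h using Relation.ReflTransGen.head_induction_on with
  | refl => exact drow_nil
  | head hs _ ih =>
    obtain ⟨u, v, h1, h2⟩ := hs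
    subst h1; subst h2
    refine Relation.ReflTransGen.head ⟨u.map hr, v.map hr, Or.inr ?_, ?_⟩ ih
    · simp [hr]
    · simp

end Helper
namespace Helper

/-! ### Row segments -/

def seg (p : ℕ → ℕ → Del) (r s t : ℕ) : List Del :=
  (List.range t).map (fun k => p r (s + k))

lemma seg_one (p : ℕ → ℕ → Del) (r s : ℕ) : seg p r s 1 = [p r s] := by
  simp [seg, List.range_succ]

lemma seg_add (p : ℕ → ℕ → Del) (r s t1 t2 : ℕ) :
    seg p r s (t1 + t2) = seg p r s t1 ++ seg p r (s + t1) t2 := by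
  simp only [seg, List.range_add, List.map_append, List.map_map]
  congr 1
  apply List.map_congr_left
  intro k _
  simp [Nat.add_assoc]

lemma row_eq_seg (p : ℕ → ℕ → Del) (n r : ℕ) : row p n r = seg p r 0 n := by
  simp [row, seg]

lemma row_length (p : ℕ → ℕ → Del) (n r : ℕ) : (row p n r).length = n := by
  simp [row]

/-! ### Degenerate pictures -/

lemma dw_n_zero {n : ℕ} {p : ℕ → ℕ → Del} (h : DW 0 n p) : n = 0 := by
  cases h with
  | empty => rfl
  | simplot _ _ _ _ hm => omega

lemma dw_m_zero {m : ℕ} {p : ℕ → ℕ → Del} (h : DW m 0 p) : m = 0 := by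
  cases h with
  | empty => rfl
  | simplot _ _ _ _ hm hn => omega

lemma even_add_even {x y : ℕ} (hx : Even x) (hy : Even y) : Even (x + y) := hx.add hy

/-! ### Evenness of dimensions -/

lemma dw_even {m n : ℕ} {p : ℕ → ℕ → Del} (h : DW m n p) (hm : 1 ≤ m) :
    Even m ∧ Even n := by
  induction h with
  | empty => omega
  | accrete m' n' p' q wr wc hdw _ _ _ _ _ _ _ _ _ _ _ _ _ ih =>
    rcases Nat.eq_zero_or_pos m' with h0 | h1
    · subst h0
      have := dw_n_zero hdw
      subst this
      constructor <;> exact ⟨1, rfl⟩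
    · obtain ⟨he1, he2⟩ := ih h1
      exact ⟨he1.add ⟨1, rfl⟩, he2.add ⟨1, rfl⟩⟩
  | simplot m n p ds hm1 hn1 hbd hcov hsub ih =>
    clear hsub
    have hwidth : ∀ d ∈ ds, Even (d.2.2.2 - d.2.1 + 1) := fun d hd => (ih d hd (by omega)).2
    have hheight : ∀ d ∈ ds, Even (d.2.2.1 - d.1 + 1) := fun d hd => (ih d hd (by omega)).1
    have hrowpar : ∀ s, s < n → ∀ d, d ∈ ds → inDom d 0 s → Even d.2.1 := by
      intro s
      induction s using Nat.strong_induction_on with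
      | _ s ihs =>
        intro hs d hd hdom
        obtain ⟨hA, hB, hc1, hc2⟩ := hdom
        rcases Nat.eq_zero_or_pos d.2.1 with h0 | h1
        · rw [h0]; exact ⟨0, rfl⟩
        · set t := d.2.1 with ht
          have htn : t < n := by omega
          obtain ⟨d', ⟨hd', hdom'⟩, _⟩ := hcov 0 (by omega) (t-1) (by omega)
          have hend : d'.2.2.2 = t - 1 := by
            by_contra hne
            have h2 : t ≤ d'.2.2.2 := by
              obtain ⟨_, _, _, h4⟩ := hdom'
              omega
            obtain ⟨e, _, heuniq⟩ := hcov 0 (by omega) t htn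
            have hx1 := hdom'.2.2.1
            have h5 : d' = e := heuniq d' ⟨hd', hdom'.1, hdom'.2.1, by omega, h2⟩
            have h6 : d = e := heuniq d ⟨hd, hA, hB, le_refl t, by omega⟩
            have : d'.2.1 ≤ t - 1 := hdom'.2.2.1
            rw [h5, ← h6] at this
            omega
          have hpar' : Even d'.2.1 := ihs (t-1) (by omega) (by omega) d' hd' hdom'
          have hw' : Even (d'.2.2.2 - d'.2.1 + 1) := hwidth d' hd'
          obtain ⟨k1, hk1⟩ := hpar'
          obtain ⟨k2, hk2⟩ := hw'
          have hle : d'.2.1 ≤ t - 1 := hdom'.2.2.1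
          exact ⟨k1 + k2, by omega⟩
    have hcolpar : ∀ r, r < m → ∀ d, d ∈ ds → inDom d r 0 → Even d.1 := by
      intro r
      induction r using Nat.strong_induction_on with
      | _ r ihr =>
        intro hrm d hd hdom
        obtain ⟨hr1, hr2, hC, hD⟩ := hdom
        rcases Nat.eq_zero_or_pos d.1 with h0 | h1
        · rw [h0]; exact ⟨0, rfl⟩
        · set t := d.1 with ht
          have htm : t < m := by omega
          obtain ⟨d', ⟨hd', hdom'⟩, _⟩ := hcov (t-1) (by omega) 0 (by omega)
          have hend : d'.2.2.1 = t - 1 := by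
            by_contra hne
            have h2 : t ≤ d'.2.2.1 := by
              obtain ⟨_, h4, _, _⟩ := hdom'
              omega
            obtain ⟨e, _, heuniq⟩ := hcov t htm 0 (by omega)
            have hx1 := hdom'.1
            have h5 : d' = e := heuniq d' ⟨hd', by omega, h2, hdom'.2.2.1, hdom'.2.2.2⟩
            have h6 : d = e := heuniq d ⟨hd, le_refl t, by omega, hC, hD⟩
            have : d'.1 ≤ t - 1 := hdom'.1
            rw [h5, ← h6] at this
            omega
          have hpar' : Even d'.1 := ihr (t-1) (by omega) (by omega) d' hd' hdom'
          have hh' : Even (d'.2.2.1 - d'.1 + 1) := hheight d' hd'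
          obtain ⟨k1, hk1⟩ := hpar'
          obtain ⟨k2, hk2⟩ := hh'
          have hle : d'.1 ≤ t - 1 := hdom'.1
          exact ⟨k1 + k2, by omega⟩
    constructor
    · obtain ⟨d, ⟨hd, hdom⟩, _⟩ := hcov (m-1) (by omega) 0 (by omega)
      have h1 : d.2.2.1 = m - 1 := by
        have := (hbd d hd).2.1
        have := hdom.2.1
        omega
      have h2 : Even d.1 := hcolpar (m-1) (by omega) d hd hdom
      have h3 : Even (d.2.2.1 - d.1 + 1) := hheight d hd
      obtain ⟨k1, hk1⟩ := h2
      obtain ⟨k2, hk2⟩ := h3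
      have : d.1 ≤ m - 1 := hdom.1
      exact ⟨k1 + k2, by omega⟩
    · obtain ⟨d, ⟨hd, hdom⟩, _⟩ := hcov 0 (by omega) (n-1) (by omega)
      have h1 : d.2.2.2 = n - 1 := by
        have := (hbd d hd).2.2.2
        have := hdom.2.2.2
        omega
      have h2 : Even d.2.1 := hrowpar (n-1) (by omega) d hd hdom
      have h3 : Even (d.2.2.2 - d.2.1 + 1) := hwidth d hd
      obtain ⟨k1, hk1⟩ := h2
      obtain ⟨k2, hk2⟩ := h3
      have : d.2.1 ≤ n - 1 := hdom.2.2.1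
      exact ⟨k1 + k2, by omega⟩

end Helper
namespace Helper

/-- In a tessellation, the top edge of any domain meeting column `c0` has even
top coordinate, provided all domain heights are even. (Stated for a fixed column.) -/
lemma simplot_col_parity {m n c0 : ℕ} {ds : Set (ℕ × ℕ × ℕ × ℕ)}
    (hcov : ∀ r < m, ∀ s < n, ∃! d, d ∈ ds ∧ inDom d r s) (hc0 : c0 < n)
    (hheight : ∀ d ∈ ds, Even (d.2.2.1 - d.1 + 1)) :
    ∀ r, r < m → ∀ d, d ∈ ds → inDom d r c0 → Even d.1 := by
  intro r
  induction r using Nat.strong_induction_on with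
  | _ r ihr =>
    intro hrm d hd hdom
    obtain ⟨hr1, hr2, hC, hD⟩ := hdom
    rcases Nat.eq_zero_or_pos d.1 with h0 | h1
    · rw [h0]; exact ⟨0, rfl⟩
    · set t := d.1 with ht
      have htm : t < m := by omega
      obtain ⟨d', ⟨hd', hdom'⟩, _⟩ := hcov (t-1) (by omega) c0 hc0
      have hend : d'.2.2.1 = t - 1 := by
        by_contra hne
        have h2 : t ≤ d'.2.2.1 := by
          obtain ⟨_, h4, _, _⟩ := hdom'
          omega
        obtain ⟨e, _, heuniq⟩ := hcov t htm c0 hc0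
        have hx1 := hdom'.1
        have h5 : d' = e := heuniq d' ⟨hd', by omega, h2, hdom'.2.2.1, hdom'.2.2.2⟩
        have h6 : d = e := heuniq d ⟨hd, le_refl t, by omega, hC, hD⟩
        have : d'.1 ≤ t - 1 := hdom'.1
        rw [h5, ← h6] at this
        omega
      have hpar' : Even d'.1 := ihr (t-1) (by omega) (by omega) d' hd' hdom'
      have hh' : Even (d'.2.2.1 - d'.1 + 1) := hheight d' hd'
      obtain ⟨k1, hk1⟩ := hpar'
      obtain ⟨k2, hk2⟩ := hh'
      have hle : d'.1 ≤ t - 1 := hdom'.1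
      exact ⟨k1 + k2, by omega⟩

/-- Width-2 pictures of `DW` are vertical stacks of `ab`/`cd` rows. -/
lemma dw_w2 {m n : ℕ} {p : ℕ → ℕ → Del} (h : DW m n p) :
    n = 2 → ∀ j < m,
      p j 0 = (if Even j then Del.a else Del.c) ∧
      p j 1 = (if Even j then Del.b else Del.d) := by
  induction h with
  | empty _ => intro _ j hj; exact absurd hj (Nat.not_lt_zero j)
  | accrete m' n' p' q wr wc hdw hab hac hlr hlc hq00 hq0n hqm0 hqmn htop hbot hleft hright hin ih =>
    intro hn j hj
    have hn' : n' = 0 := by omega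
    subst hn'
    have hm' : m' = 0 := dw_m_zero hdw
    subst hm'
    interval_cases j
    · rw [if_pos (Even.zero), if_pos (Even.zero)]
      exact ⟨hq00, hq0n⟩
    · rw [if_neg (by decide), if_neg (by decide)]
      exact ⟨hqm0, hqmn⟩
  | simplot m n p ds hm1 hn1 hbd hcov hsub ih =>
    intro hn j hj
    subst hn
    have hheight : ∀ d ∈ ds, Even (d.2.2.1 - d.1 + 1) := by
      intro d hd
      exact (dw_even (hsub d hd) (by omega)).1
    obtain ⟨d, ⟨hd, hdom⟩, _⟩ := hcov j hj 0 (by omega)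
    obtain ⟨h1, h2, h3, h4⟩ := hdom
    have hb := hbd d hd
    have hc1 : d.2.1 = 0 := by omega
    have hwid : Even (d.2.2.2 - d.2.1 + 1) := (dw_even (hsub d hd) (by omega)).2
    have hc2 : d.2.2.2 = 1 := by
      obtain ⟨k, hk⟩ := hwid
      omega
    have hpar : Even d.1 :=
      simplot_col_parity hcov (by omega) hheight j hj d hd ⟨h1, h2, h3, h4⟩
    have hcells := ih d hd (by omega) (j - d.1) (by omega)
    have hcell0 : p (d.1 + (j - d.1)) (d.2.1 + 0) = (if Even (j - d.1) then Del.a else Del.c) :=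
      hcells.1
    have hcell1 : p (d.1 + (j - d.1)) (d.2.1 + 1) = (if Even (j - d.1) then Del.b else Del.d) :=
      hcells.2
    have hj0 : d.1 + (j - d.1) = j := by omega
    have hparity : Even (j - d.1) ↔ Even j := by
      rw [Nat.even_sub h1]
      obtain ⟨k, hk⟩ := hpar
      constructor
      · intro hiff
        exact hiff.mpr ⟨k, hk⟩
      · intro hje
        exact iff_of_true hje ⟨k, hk⟩
    rw [hj0, hc1] at hcell0 hcell1
    simp only [Nat.zero_add] at hcell0 hcell1
    constructor
    · rw [hcell0]
      by_cases hje : Even j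
      · rw [if_pos hje, if_pos (hparity.mpr hje)]
      · rw [if_neg hje, if_neg (fun hc => hje (hparity.mp hc))]
    · rw [hcell1]
      by_cases hje : Even j
      · rw [if_pos hje, if_pos (hparity.mpr hje)]
      · rw [if_neg hje, if_neg (fun hc => hje (hparity.mp hc))]

end Helper
namespace Helper

lemma dw_rows_drow {m n : ℕ} {p : ℕ → ℕ → Del} (h : DW m n p) :
    ∀ i < m, DRow (row p n i) := by
  induction h with
  | empty _ => intro i hi; exact absurd hi (Nat.not_lt_zero i)
  | accrete m' n' p' q wr wc hdw hab hac hlr hlc hq00 hq0n hqm0 hqmn htop hbot hleft hright hin ih =>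
    intro i hi
    rw [row_eq_seg]
    have hsplit : seg q i 0 (n' + 2) = [q i 0] ++ seg q i 1 n' ++ [q i (n' + 1)] := by
      have h1 : n' + 2 = 1 + (n' + 1) := by omega
      rw [h1, seg_add, seg_add, seg_one, seg_one]
      simp [Nat.add_comm]
    rw [hsplit]
    have wrap : ∀ (u : List Del), DRow u →
        ((q i 0 = Del.a ∧ q i (n' + 1) = Del.b) ∨ (q i 0 = Del.c ∧ q i (n' + 1) = Del.d)) →
        DRow ([q i 0] ++ u ++ [q i (n' + 1)]) := by
      intro u hu hxy
      have : [q i 0] ++ u ++ [q i (n' + 1)] = q i 0 :: (u ++ [q i (n' + 1)]) := by simp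
      rw [this]
      exact drow_wrap hxy hu
    rcases Nat.eq_zero_or_pos i with h0 | hpos
    · subst h0
      have hmid : seg q 0 1 n' = wr := by
        apply List.ext_getElem
        · simp [seg, hlr]
        · intro k hk1 hk2
          have hkn : k < n' := by simpa [seg] using hk1
          simp only [seg, List.getElem_map, List.getElem_range]
          rw [Nat.add_comm 1 k, htop k hkn]
          exact List.getD_eq_getElem wr Del.a hk2
      rw [hmid]
      exact wrap wr (dyckAB_drow hab) (Or.inl ⟨hq00, hq0n⟩)
    · rcases Nat.lt_or_ge i (m' + 1) with hlt | hge
      · obtain ⟨r, rfl⟩ : ∃ r, i = r + 1 := ⟨i - 1, by omega⟩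
        have hrm : r < m' := by omega
        have hmid : seg q (r + 1) 1 n' = row p' n' r := by
          apply List.ext_getElem
          · simp [seg, row]
          · intro k hk1 hk2
            have hkn : k < n' := by simpa [seg] using hk1
            simp only [seg, row, List.getElem_map, List.getElem_range]
            rw [Nat.add_comm 1 k]
            exact hin r hrm k hkn
        rw [hmid]
        have hx := hleft r hrm
        have hy := hright r hrm
        have hmem : wr ∈ [wr] := by simp
        have hwc : wc.getD r Del.a = Del.a ∨ wc.getD r Del.a = Del.c := by
          apply dyckAC_mem hac
          rw [List.getD_eq_getElem wc Del.a (by omega)]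
          exact List.getElem_mem _
        apply wrap _ (ih r hrm)
        rcases hwc with hh | hh
        · left
          rw [hx, hy, hh]
          exact ⟨rfl, rfl⟩
        · right
          rw [hx, hy, hh]
          exact ⟨rfl, rfl⟩
      · have hieq : i = m' + 1 := by omega
        subst hieq
        have hmid : seg q (m' + 1) 1 n' = wr.map hr := by
          apply List.ext_getElem
          · simp [seg, hlr]
          · intro k hk1 hk2
            have hkn : k < n' := by simpa [seg] using hk1
            simp only [seg, List.getElem_map, List.getElem_range]
            rw [Nat.add_comm 1 k, hbot k hkn]
            congr 1
            exact List.getD_eq_getElem wr Del.a (by omega)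
        rw [hmid]
        exact wrap _ (dyckAB_map_hr_drow hab) (Or.inr ⟨hqm0, hqmn⟩)
  | simplot m n p ds hm1 hn1 hbd hcov hsub ih =>
    intro r hrm
    rw [row_eq_seg]
    have claim : ∀ k s, n - s ≤ k → s ≤ n →
        (s = n ∨ ∃ d, d ∈ ds ∧ inDom d r s ∧ d.2.1 = s) →
        DRow (seg p r s (n - s)) := by
      intro k
      induction k with
      | zero =>
        intro s hk hs _
        have : n - s = 0 := by omega
        rw [this]
        exact drow_nil
      | succ k ihk =>
        intro s hk hs halign
        rcases halign with hsn | ⟨d, hd, hdom, hc1⟩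
        · have h0 : n - s = 0 := by omega
          rw [h0]
          exact drow_nil
        · obtain ⟨h1, h2, h3, h4⟩ := hdom
          have hb := hbd d hd
          set e := d.2.2.2 with he
          have hse : s ≤ e := by omega
          have hen : e < n := hb.2.2.2
          have hns : n - s = (e - s + 1) + (n - (e + 1)) := by omega
          rw [hns, seg_add]
          apply drow_append
          · -- the chunk is a full row of the sub-picture
            have hrow := ih d hd (r - d.1) (by omega)
            rw [row_eq_seg] at hrow
            have heq : seg (fun r' s' => p (d.1 + r') (d.2.1 + s')) (r - d.1) 0
                (d.2.2.2 - d.2.1 + 1) = seg p r s (e - s + 1) := by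
              apply List.ext_getElem
              · simp [seg, hc1, he]
              · intro k' hk1 hk2
                simp only [seg, List.getElem_map, List.getElem_range]
                have hr1 : d.1 + (r - d.1) = r := by omega
                rw [hr1, hc1]
                congr 1
                omega
            rw [heq] at hrow
            exact hrow
          · have hsw : s + (e - s + 1) = e + 1 := by omega
            rw [hsw]
            apply ihk (e + 1) (by omega) (by omega)
            rcases Nat.eq_or_lt_of_le (Nat.succ_le_of_lt hen) with heq | hlt
            · left; omega
            · right
              obtain ⟨d', ⟨hd', hdom'⟩, _⟩ := hcov r hrm (e + 1) (by omega)
              refine ⟨d', hd', hdom', ?_⟩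
              by_contra hne
              have h5 : d'.2.1 ≤ e := by
                have := hdom'.2.2.1
                omega
              obtain ⟨f, _, hfuniq⟩ := hcov r hrm e hen
              have h6 : d' = f := hfuniq d' ⟨hd', hdom'.1, hdom'.2.1, h5, by
                have := hdom'.2.2.2; omega⟩
              have h7 : d = f := hfuniq d ⟨hd, h1, h2, by omega, le_refl e⟩
              have h8 : e + 1 ≤ d'.2.2.2 := hdom'.2.2.2
              rw [h6, ← h7] at h8
              omega
    have halign0 : (0 = n) ∨ ∃ d, d ∈ ds ∧ inDom d r 0 ∧ d.2.1 = 0 := by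
      obtain ⟨d, ⟨hd, hdom⟩, _⟩ := hcov r hrm 0 (by omega)
      have := hdom.2.2.1
      exact Or.inr ⟨d, hd, hdom, by omega⟩
    have hfin := claim n 0 (by omega) (by omega) halign0
    simpa using hfin

end Helper
namespace Helper

lemma not_even_pred {j : ℕ} (h : Even j) (h1 : 1 ≤ j) : ¬ Even (j - 1) := by
  rw [Nat.even_iff] at h ⊢; omega

lemma even_pred {j : ℕ} (h : ¬ Even j) : Even (j - 1) := by
  rw [Nat.even_iff] at h ⊢; omega

lemma odd_pos {j : ℕ} (h : ¬ Even j) : 1 ≤ j := by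
  rw [Nat.even_iff] at h; omega

lemma iteA {j : ℕ} (h : (if Even j then Del.a else Del.c) = Del.a) : Even j := by
  by_cases he : Even j
  · exact he
  · rw [if_neg he] at h; exact absurd h (by decide)

lemma iteC {j : ℕ} (h : (if Even j then Del.a else Del.c) = Del.c) : ¬ Even j := by
  intro he
  rw [if_pos he] at h; exact absurd h (by decide)

lemma dw_no4 {m n : ℕ} {p : ℕ → ℕ → Del} (h : DW m n p) :
    n = 4 → ∀ i < m,
      ¬(p i 0 = Del.a ∧ p i 1 = Del.b ∧ p i 2 = Del.c ∧ p i 3 = Del.d) ∧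
      ¬(p i 0 = Del.c ∧ p i 1 = Del.d ∧ p i 2 = Del.a ∧ p i 3 = Del.b) := by
  induction h with
  | empty _ => intro _ i hi; exact absurd hi (Nat.not_lt_zero i)
  | accrete m' n' p' q wr wc hdw hab hac hlr hlc hq00 hq0n hqm0 hqmn htop hbot hleft hright hin ih =>
    intro hn i hi
    have hn' : n' = 2 := by omega
    subst hn'
    rcases Nat.eq_zero_or_pos i with rfl | hp
    · constructor
      · rintro ⟨h0a, h1b, h2c, h3d⟩
        have hgd : wr.getD 1 Del.a = Del.c := by
          rw [← htop 1 (by omega)]; exact h2c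
        have hmem : wr.getD 1 Del.a ∈ wr := by
          rw [List.getD_eq_getElem wr _ (by omega)]
          exact List.getElem_mem _
        rcases dyckAB_mem hab _ hmem with h | h <;> rw [h] at hgd <;>
          exact absurd hgd (by decide)
      · rintro ⟨h0c, _, _, _⟩
        rw [hq00] at h0c
        exact absurd h0c (by decide)
    · by_cases hi2 : i = m' + 1
      · subst hi2
        constructor
        · rintro ⟨h0a, _, _, _⟩
          rw [hqm0] at h0a
          exact absurd h0a (by decide)
        · rintro ⟨_, _, _, h3b⟩
          rw [hqmn] at h3b
          exact absurd h3b (by decide)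
      · obtain ⟨r, rfl⟩ : ∃ r, i = r + 1 := ⟨i - 1, by omega⟩
        have hrm : r < m' := by omega
        constructor
        · rintro ⟨h0a, _, _, h3d⟩
          have h6 : wc.getD r Del.a = Del.a := by rw [← hleft r hrm]; exact h0a
          have h5 : hc (wc.getD r Del.a) = Del.d := by rw [← hright r hrm]; exact h3d
          rw [h6] at h5
          exact absurd h5 (by decide)
        · rintro ⟨h0c, _, _, h3b⟩
          have h6 : wc.getD r Del.a = Del.c := by rw [← hleft r hrm]; exact h0c
          have h5 : hc (wc.getD r Del.a) = Del.b := by rw [← hright r hrm]; exact h3b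
          rw [h6] at h5
          exact absurd h5 (by decide)
  | simplot m n p ds hm1 hn1 hbd hcov hsub ih =>
    intro hn i
    subst hn
    induction i using Nat.strong_induction_on with
    | _ i ihi =>
      intro hi
      obtain ⟨d0, ⟨hd0, hdom0⟩, _⟩ := hcov i hi 0 (by omega)
      obtain ⟨hA0, hB0, hC0, hD0⟩ := hdom0
      have hb0 := hbd d0 hd0
      have hc10 : d0.2.1 = 0 := by omega
      have hwid0 : Even (d0.2.2.2 - d0.2.1 + 1) := (dw_even (hsub d0 hd0) (by omega)).2
      have hd022 : d0.2.2.2 = 1 ∨ d0.2.2.2 = 3 := by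
        obtain ⟨k, hk⟩ := hwid0
        omega
      rcases hd022 with hw1 | hw3
      · -- d0 has width 2; get the domain at column 2
        obtain ⟨d2, ⟨hd2, hdom2⟩, _⟩ := hcov i hi 2 (by omega)
        obtain ⟨hA2, hB2, hC2, hD2⟩ := hdom2
        have hb2 := hbd d2 hd2
        have hc12 : d2.2.1 = 2 := by
          by_contra hne
          have h12 : d2.2.1 ≤ 1 := by omega
          obtain ⟨f, _, hfuniq⟩ := hcov i hi 1 (by omega)
          have h5 : d2 = f := hfuniq d2 ⟨hd2, hA2, hB2, h12, by omega⟩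
          have h6 : d0 = f := hfuniq d0 ⟨hd0, hA0, hB0, by omega, by omega⟩
          have h7 : d2.2.2.2 = d0.2.2.2 := by rw [h5, h6]
          omega
        have hwid2 : Even (d2.2.2.2 - d2.2.1 + 1) := (dw_even (hsub d2 hd2) (by omega)).2
        have hc22 : d2.2.2.2 = 3 := by
          obtain ⟨k, hk⟩ := hwid2
          have := hb2.2.2.2
          omega
        have hw0 := dw_w2 (hsub d0 hd0) (by omega)
        have hw2 := dw_w2 (hsub d2 hd2) (by omega)
        constructor
        · rintro ⟨h0a, h1b, h2c, h3d⟩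
          -- parity of position of row i in each strip
          have hj0ev : Even (i - d0.1) := by
            have hcell := (hw0 (i - d0.1) (by omega)).1
            rw [(by omega : d0.1 + (i - d0.1) = i), (by omega : d0.2.1 + 0 = 0), h0a] at hcell
            exact iteA hcell.symm
          have hj2odd : ¬ Even (i - d2.1) := by
            have hcell := (hw2 (i - d2.1) (by omega)).1
            rw [(by omega : d2.1 + (i - d2.1) = i), (by omega : d2.2.1 + 0 = 2), h2c] at hcell
            exact iteC hcell.symm
          have hpos2 : 1 ≤ i - d2.1 := odd_pos hj2odd
          have hi1 : 1 ≤ i := by omega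
          -- row i-1, columns 2,3
          have hc23 : p (i-1) 2 = Del.a ∧ p (i-1) 3 = Del.b := by
            obtain ⟨hx, hy⟩ := hw2 (i - d2.1 - 1) (by omega)
            rw [(by omega : d2.1 + (i - d2.1 - 1) = i - 1)] at hx hy
            rw [(by omega : d2.2.1 + 0 = 2)] at hx
            rw [(by omega : d2.2.1 + 1 = 3)] at hy
            rw [if_pos (even_pred hj2odd)] at hx hy
            exact ⟨hx, hy⟩
          -- row i-1, columns 0,1
          have hc01 : p (i-1) 0 = Del.c ∧ p (i-1) 1 = Del.d := by
            by_cases hge : 1 ≤ i - d0.1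
            · obtain ⟨hx, hy⟩ := hw0 (i - d0.1 - 1) (by omega)
              rw [(by omega : d0.1 + (i - d0.1 - 1) = i - 1)] at hx hy
              rw [(by omega : d0.2.1 + 0 = 0)] at hx
              rw [(by omega : d0.2.1 + 1 = 1)] at hy
              rw [if_neg (not_even_pred hj0ev hge)] at hx hy
              exact ⟨hx, hy⟩
            · have hieq : d0.1 = i := by omega
              obtain ⟨d3, ⟨hd3, hdom3⟩, _⟩ := hcov (i-1) (by omega) 0 (by omega)
              obtain ⟨hA3, hB3, hC3, hD3⟩ := hdom3
              have hb3 := hbd d3 hd3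
              have hc13 : d3.2.1 = 0 := by omega
              have hbot3 : d3.2.2.1 = i - 1 := by
                by_contra hne
                have h2 : i ≤ d3.2.2.1 := by omega
                obtain ⟨f, _, hfuniq⟩ := hcov i hi 0 (by omega)
                have h5 : d3 = f := hfuniq d3 ⟨hd3, by omega, h2, hC3, hD3⟩
                have h6 : d0 = f := hfuniq d0 ⟨hd0, hA0, hB0, hC0, hD0⟩
                have h7 : d3.1 = d0.1 := by rw [h5, h6]
                omega
              have hwid3 : Even (d3.2.2.2 - d3.2.1 + 1) :=
                (dw_even (hsub d3 hd3) (by omega)).2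
              have hc23'' : d3.2.2.2 = 1 := by
                obtain ⟨k, hk⟩ := hwid3
                have h13 : d3.2.2.2 = 1 ∨ d3.2.2.2 = 3 := by
                  have := hb3.2.2.2
                  omega
                rcases h13 with h | h
                · exact h
                · exfalso
                  obtain ⟨f, _, hfuniq⟩ := hcov (i-1) (by omega) 2 (by omega)
                  have h5 : d3 = f := hfuniq d3 ⟨hd3, hA3, hB3, by omega, by omega⟩
                  have h6 : d2 = f := hfuniq d2 ⟨hd2, by omega, by omega, by omega, by omega⟩
                  have h7 : d3.2.1 = d2.2.1 := by rw [h5, h6]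
                  omega
              have hh3 : Even (d3.2.2.1 - d3.1 + 1) := (dw_even (hsub d3 hd3) (by omega)).1
              obtain ⟨hx, hy⟩ := dw_w2 (hsub d3 hd3) (by omega) (i - 1 - d3.1) (by omega)
              rw [(by omega : d3.1 + (i - 1 - d3.1) = i - 1)] at hx hy
              rw [(by omega : d3.2.1 + 0 = 0)] at hx
              rw [(by omega : d3.2.1 + 1 = 1)] at hy
              have hodd3 : ¬ Even (i - 1 - d3.1) := by
                obtain ⟨k, hk⟩ := hh3
                rintro ⟨k2, hk2⟩
                omega
              rw [if_neg hodd3] at hx hy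
              exact ⟨hx, hy⟩
          exact (ihi (i-1) (by omega) (by omega)).2 ⟨hc01.1, hc01.2, hc23.1, hc23.2⟩
        · rintro ⟨h0c, h1d, h2a, h3b⟩
          have hj0odd : ¬ Even (i - d0.1) := by
            have hcell := (hw0 (i - d0.1) (by omega)).1
            rw [(by omega : d0.1 + (i - d0.1) = i), (by omega : d0.2.1 + 0 = 0), h0c] at hcell
            exact iteC hcell.symm
          have hj2ev : Even (i - d2.1) := by
            have hcell := (hw2 (i - d2.1) (by omega)).1
            rw [(by omega : d2.1 + (i - d2.1) = i), (by omega : d2.2.1 + 0 = 2), h2a] at hcell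
            exact iteA hcell.symm
          have hpos0 : 1 ≤ i - d0.1 := odd_pos hj0odd
          have hi1 : 1 ≤ i := by omega
          -- row i-1, columns 0,1
          have hc01 : p (i-1) 0 = Del.a ∧ p (i-1) 1 = Del.b := by
            obtain ⟨hx, hy⟩ := hw0 (i - d0.1 - 1) (by omega)
            rw [(by omega : d0.1 + (i - d0.1 - 1) = i - 1)] at hx hy
            rw [(by omega : d0.2.1 + 0 = 0)] at hx
            rw [(by omega : d0.2.1 + 1 = 1)] at hy
            rw [if_pos (even_pred hj0odd)] at hx hy
            exact ⟨hx, hy⟩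
          -- row i-1, columns 2,3
          have hc23 : p (i-1) 2 = Del.c ∧ p (i-1) 3 = Del.d := by
            by_cases hge : 1 ≤ i - d2.1
            · obtain ⟨hx, hy⟩ := hw2 (i - d2.1 - 1) (by omega)
              rw [(by omega : d2.1 + (i - d2.1 - 1) = i - 1)] at hx hy
              rw [(by omega : d2.2.1 + 0 = 2)] at hx
              rw [(by omega : d2.2.1 + 1 = 3)] at hy
              rw [if_neg (not_even_pred hj2ev hge)] at hx hy
              exact ⟨hx, hy⟩
            · have hieq : d2.1 = i := by omega
              obtain ⟨d3, ⟨hd3, hdom3⟩, _⟩ := hcov (i-1) (by omega) 2 (by omega)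
              obtain ⟨hA3, hB3, hC3, hD3⟩ := hdom3
              have hb3 := hbd d3 hd3
              have hc13 : d3.2.1 = 2 := by
                by_contra hne
                have h12 : d3.2.1 ≤ 1 := by omega
                obtain ⟨f, _, hfuniq⟩ := hcov (i-1) (by omega) 1 (by omega)
                have h5 : d3 = f := hfuniq d3 ⟨hd3, hA3, hB3, h12, by omega⟩
                have h6 : d0 = f := hfuniq d0 ⟨hd0, by omega, by omega, by omega, by omega⟩
                have h7 : d3.2.2.2 = d0.2.2.2 := by rw [h5, h6]
                omega
              have hwid3 : Even (d3.2.2.2 - d3.2.1 + 1) :=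
                (dw_even (hsub d3 hd3) (by omega)).2
              have hc23'' : d3.2.2.2 = 3 := by
                obtain ⟨k, hk⟩ := hwid3
                have := hb3.2.2.2
                omega
              have hbot3 : d3.2.2.1 = i - 1 := by
                by_contra hne
                have h2 : i ≤ d3.2.2.1 := by omega
                obtain ⟨f, _, hfuniq⟩ := hcov i hi 2 (by omega)
                have h5 : d3 = f := hfuniq d3 ⟨hd3, by omega, h2, by omega, by omega⟩
                have h6 : d2 = f := hfuniq d2 ⟨hd2, hA2, hB2, hC2, hD2⟩
                have h7 : d3.1 = d2.1 := by rw [h5, h6]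
                omega
              have hh3 : Even (d3.2.2.1 - d3.1 + 1) := (dw_even (hsub d3 hd3) (by omega)).1
              obtain ⟨hx, hy⟩ := dw_w2 (hsub d3 hd3) (by omega) (i - 1 - d3.1) (by omega)
              rw [(by omega : d3.1 + (i - 1 - d3.1) = i - 1)] at hx hy
              rw [(by omega : d3.2.1 + 0 = 2)] at hx
              rw [(by omega : d3.2.1 + 1 = 3)] at hy
              have hodd3 : ¬ Even (i - 1 - d3.1) := by
                obtain ⟨k, hk⟩ := hh3
                rintro ⟨k2, hk2⟩
                omega
              rw [if_neg hodd3] at hx hy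
              exact ⟨hx, hy⟩
          exact (ihi (i-1) (by omega) (by omega)).1 ⟨hc01.1, hc01.2, hc23.1, hc23.2⟩
      · -- d0 spans the full width
        have hconv : ∀ s, p (d0.1 + (i - d0.1)) (d0.2.1 + s) = p i s := by
          intro s
          rw [(by omega : d0.1 + (i - d0.1) = i), hc10, Nat.zero_add]
        obtain ⟨hn1', hn2'⟩ := ih d0 hd0 (by omega) (i - d0.1) (by omega)
        simp only [hconv] at hn1' hn2'
        exact ⟨hn1', hn2'⟩

end Helper
/-- The Dyck word `abcd` is never a row of a DW₁ picture; hence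
ROW(DW₁) ⊊ D^Row. -/
theorem abcd_not_row_of_DW :
    DRow [Del.a, Del.b, Del.c, Del.d] ∧
    [Del.a, Del.b, Del.c, Del.d] ∉ ROWDW ∧
    ROWDW ⊂ {w | DRow w} := by
  have habcd : DRow [Del.a, Del.b, Del.c, Del.d] := by
    have := Helper.drow_append Helper.drow_ab Helper.drow_cd
    simpa using this
  have hnot : [Del.a, Del.b, Del.c, Del.d] ∉ ROWDW := by
    rintro ⟨m, n, p, i, hdw, hi, hrow⟩
    have hlen : n = 4 := by
      have := congrArg List.length hrow
      simpa [row] using this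
    subst hlen
    have hr' : [p i 0, p i 1, p i 2, p i 3] = [Del.a, Del.b, Del.c, Del.d] := by
      rw [← hrow]
      simp [row, List.range_succ]
    obtain ⟨h0, h1, h2, h3⟩ : p i 0 = Del.a ∧ p i 1 = Del.b ∧ p i 2 = Del.c ∧ p i 3 = Del.d := by
      simpa using hr'
    exact (Helper.dw_no4 hdw rfl i hi).1 ⟨h0, h1, h2, h3⟩
  refine ⟨habcd, hnot, ?_⟩
  rw [Set.ssubset_def]
  constructor
  · rintro w ⟨m, n, p, i, hdw, hi, rfl⟩
    exact Helper.dw_rows_drow hdw i hi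
  · intro hge
    exact hnot (hge habcd)
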